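/- arXiv:1202.4816 — 2 statements merged into one kernel-verified Lean document; each statement's English description precedes it below -/
import Mathlib

section
/- If q̄ = {p, q, r} is a Farey triple, then for every element p of q̄ the mutation μ_p(q̄) is again a Farey triple. -/
/-- `ℚ∞ = ℚ ∪ {∞}`, ordered with `∞ = ⊤` as the greatest element. -/
abbrev QInf : Type := WithTop ℚ

/-- The numerator `d(q)` of the reduced representation `q = d(q)/r(q)`; `d(∞) = 1`. -/
def fnum : QInf → ℤ := WithTop.recTopCoe 1 (fun q => q.num)

/-- The denominator `r(q)` of the reduced representation `q = d(q)/r(q)`; `r(∞) = 0`. -/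
def fden : QInf → ℤ := WithTop.recTopCoe 0 (fun q => (q.den : ℤ))

/-- The element of `ℚ∞` represented by the fraction `a / b`: it is `∞` if `b = 0`,
and otherwise the rational number `a / b` (normalized so that the denominator is
positive and the fraction is in lowest terms). -/
def fmk (a b : ℤ) : QInf := if b = 0 then (⊤ : QInf) else (((a : ℚ) / (b : ℚ)) : ℚ)

/-- The Farey distance `Δ(p,q) = |d(p)r(q) - d(q)r(p)|`. -/
def fdist (p q : QInf) : ℤ := |fnum p * fden q - fnum q * fden p|

/-- `p` and `q` are Farey neighbours if `Δ(p,q) = 1`. -/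
def FareyNbr (p q : QInf) : Prop := fdist p q = 1

/-- The Farey sum `p ⊕ q = (d(p) + d(q)) / (r(p) + r(q))`. -/
def fsum (p q : QInf) : QInf := fmk (fnum p + fnum q) (fden p + fden q)

/-- The Farey difference `p ⊖ q = (d(p) - d(q)) / (r(p) - r(q))`. -/
def fdiff (p q : QInf) : QInf := fmk (fnum p - fnum q) (fden p - fden q)

/-- A Farey triple: a three-element subset of `ℚ∞` whose elements are pairwise
Farey neighbours. -/
def IsFareyTriple (s : Set QInf) : Prop := s.ncard = 3 ∧ s.Pairwise FareyNbr

/-- The element replacing `p` in the mutation of the Farey triple `{p, q, r}` in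
direction `p`: it is `q ⊖ r` if `p` lies strictly between `q` and `r`, and `q ⊕ r`
otherwise. -/
def fareyMutEl (p q r : QInf) : QInf :=
  if (q < p ∧ p < r) ∨ (r < p ∧ p < q) then fdiff q r else fsum q r

/-- The mutation of the Farey triple `{p, q, r}` in direction `p`. -/
def fareyMut (p q r : QInf) : Set QInf := {fareyMutEl p q r, q, r}

/-- The complexity `c(q) = |d(q)| + r(q) + |d(q) - r(q)|`. -/
def complexity (x : QInf) : ℤ := |fnum x| + fden x + |fnum x - fden x|

/-! ### Auxiliary lemmas -/

lemma fnum_fmk (a b : ℤ) (hb : 0 < b) (h : IsCoprime a b) : fnum (fmk a b) = a := by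
  rw [fmk, if_neg hb.ne']
  show ((a:ℚ)/b).num = a
  exact Rat.num_div_eq_of_coprime hb (Int.isCoprime_iff_gcd_eq_one.mp h)

lemma fden_fmk (a b : ℤ) (hb : 0 < b) (h : IsCoprime a b) : fden (fmk a b) = b := by
  rw [fmk, if_neg hb.ne']
  show (((a:ℚ)/b).den : ℤ) = b
  exact Rat.den_div_eq_of_coprime hb (Int.isCoprime_iff_gcd_eq_one.mp h)

lemma fmk_neg (a b : ℤ) : fmk (-a) (-b) = fmk a b := by
  unfold fmk
  by_cases hb : b = 0
  · simp [hb]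
  · rw [if_neg hb, if_neg (neg_ne_zero.mpr hb)]
    push_cast
    rw [neg_div_neg_eq]

/-- Values of `fnum`/`fden` of `fmk a b` for coprime `a`, `b`, up to a global sign. -/
lemma fmk_spec (a b : ℤ) (h : IsCoprime a b) :
    (fnum (fmk a b) = a ∧ fden (fmk a b) = b) ∨
    (fnum (fmk a b) = -a ∧ fden (fmk a b) = -b) := by
  rcases lt_trichotomy b 0 with hb | hb | hb
  · right
    rw [← fmk_neg a b]
    exact ⟨fnum_fmk _ _ (by omega) h.neg_neg, fden_fmk _ _ (by omega) h.neg_neg⟩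
  · -- b = 0, so a is a unit
    subst hb
    have ha : a = 1 ∨ a = -1 := Int.isUnit_iff.mp (isCoprime_zero_right.mp h)
    have : fmk a 0 = ⊤ := by rw [fmk, if_pos rfl]
    rcases ha with ha | ha <;> subst ha <;> rw [this]
    · exact Or.inl ⟨rfl, rfl⟩
    · exact Or.inr ⟨by decide, by decide⟩
  · left
    exact ⟨fnum_fmk _ _ hb h, fden_fmk _ _ hb h⟩

lemma fden_nonneg (x : QInf) : 0 ≤ fden x := by
  cases x with
  | none => exact le_refl 0
  | some x => exact Int.ofNat_nonneg x.den

lemma fdist_self (x : QInf) : fdist x x = 0 := by simp [fdist]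

lemma fdist_comm (x y : QInf) : fdist x y = fdist y x := by
  rw [fdist, fdist, abs_sub_comm]

lemma FareyNbr.symm {x y : QInf} (h : FareyNbr x y) : FareyNbr y x := by
  rwa [FareyNbr, fdist_comm]

lemma FareyNbr.ne {x y : QInf} (h : FareyNbr x y) : x ≠ y := by
  rintro rfl
  rw [FareyNbr, fdist_self] at h
  exact absurd h (by norm_num)

/-- Key computation: if `|a*d - c*b| = 1` then `fmk x y` (for suitable coprime
`x`, `y` with `x*d - c*y = ±(a*d - c*b)` etc.) is a neighbour of both. -/
lemma fmk_nbr (q r : QInf) (x y : ℤ)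
    (hq : |x * fden q - fnum q * y| = 1) (hr : |x * fden r - fnum r * y| = 1)
    (hcop : IsCoprime x y) : FareyNbr (fmk x y) q ∧ FareyNbr (fmk x y) r := by
  rcases fmk_spec x y hcop with ⟨hn, hd⟩ | ⟨hn, hd⟩ <;>
    constructor <;> rw [FareyNbr, fdist, hn, hd]
  · exact hq
  · exact hr
  · rw [show -x * fden q - fnum q * -y = -(x * fden q - fnum q * y) by ring, abs_neg]; exact hq
  · rw [show -x * fden r - fnum r * -y = -(x * fden r - fnum r * y) by ring, abs_neg]; exact hr

lemma nbr_of_nbr (q r : QInf) (h : FareyNbr q r) (s : ℤ) (hs : s = 1 ∨ s = -1) :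
    FareyNbr (fmk (fnum q + s * fnum r) (fden q + s * fden r)) q ∧
    FareyNbr (fmk (fnum q + s * fnum r) (fden q + s * fden r)) r := by
  set a := fnum q with ha
  set b := fden q with hb
  set c := fnum r with hc
  set d := fden r with hd
  have h' : a * d - c * b = 1 ∨ a * d - c * b = -1 := by
    rcases abs_eq (by norm_num : (0:ℤ) ≤ 1) |>.mp h with h' | h'
    · exact Or.inl h'
    · exact Or.inr h'
  have hcop : IsCoprime (a + s * c) (b + s * d) := by
    rcases h' with h' | h'
    · exact ⟨d, -c, by linear_combination h'⟩
    · exact ⟨-d, c, by linear_combination -h'⟩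
  refine fmk_nbr q r _ _ ?_ ?_ hcop
  · rw [show (a + s * c) * b - a * (b + s * d) = -s * (a * d - c * b) by ring, abs_mul]
    rcases hs with hs | hs <;> rcases h' with h' | h' <;> simp [hs, h']
  · rw [show (a + s * c) * d - c * (b + s * d) = a * d - c * b by ring]
    exact h

lemma nbr_fsum (q r : QInf) (h : FareyNbr q r) :
    FareyNbr (fsum q r) q ∧ FareyNbr (fsum q r) r := by
  have := nbr_of_nbr q r h 1 (Or.inl rfl)
  simpa [fsum, one_mul] using this

lemma nbr_fdiff (q r : QInf) (h : FareyNbr q r) :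
    FareyNbr (fdiff q r) q ∧ FareyNbr (fdiff q r) r := by
  have := nbr_of_nbr q r h (-1) (Or.inr rfl)
  simpa [fdiff, sub_eq_add_neg, neg_mul, one_mul] using this

/-- If `{p, q, r}` is a Farey triple, then its mutation in direction `p` is again a
Farey triple.  (By symmetry of the hypotheses in `p`, `q`, `r`, this covers the
mutation in any of the three directions.) -/
theorem fareyMut_isFareyTriple (p q r : QInf)
    (hpq : p ≠ q) (hpr : p ≠ r) (hqr : q ≠ r)
    (h1 : FareyNbr p q) (h2 : FareyNbr p r) (h3 : FareyNbr q r) :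
    IsFareyTriple (fareyMut p q r) := by
  set m := fareyMutEl p q r with hm
  have key : FareyNbr m q ∧ FareyNbr m r := by
    rw [hm, fareyMutEl]
    split
    · exact nbr_fdiff q r h3
    · exact nbr_fsum q r h3
  obtain ⟨kq, kr⟩ := key
  constructor
  · rw [fareyMut, show ({fareyMutEl p q r, q, r} : Set QInf) = {m, q, r} from rfl]
    rw [Set.ncard_insert_of_notMem (by simp [kq.ne, kr.ne]) (Set.toFinite _),
      Set.ncard_pair hqr]
  · intro x hx y hy hxy
    simp only [fareyMut, Set.mem_insert_iff, Set.mem_singleton_iff] at hx hy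
    rcases hx with rfl | rfl | rfl <;> rcases hy with rfl | rfl | rfl <;>
      first
        | exact absurd rfl hxy
        | exact kq | exact kq.symm | exact kr | exact kr.symm
        | exact h3 | exact h3.symm
end

section
/- Mutation of Farey triples is involutive: if q̄ = {p, q, r} is a Farey triple and μ_p(q̄) = {p', q, r}, then μ_{p'}(μ_p(q̄)) = q̄. -/
lemma fnum_coe (q : ℚ) : fnum (q : QInf) = q.num := rfl
lemma fden_coe (q : ℚ) : fden (q : QInf) = (q.den : ℤ) := rfl
lemma fnum_top : fnum (⊤ : QInf) = 1 := rfl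
lemma fden_top : fden (⊤ : QInf) = 0 := rfl

lemma fden_eq_zero_iff (x : QInf) : fden x = 0 ↔ x = ⊤ := by
  cases x using WithTop.recTopCoe with
  | top => simp [fden_top]
  | coe q => simp [fden_coe, q.den_nz]

lemma fmk_self (x : QInf) : fmk (fnum x) (fden x) = x := by
  cases x using WithTop.recTopCoe with
  | top => simp [fmk, fnum_top, fden_top]
  | coe q =>
    rw [fnum_coe, fden_coe, fmk, if_neg (by exact_mod_cast q.den_nz)]
    congr 1
    push_cast
    exact Rat.num_div_den q

lemma rat_lt_div (c : ℚ) {a b : ℤ} (hb : 0 < b) :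
    c < (a:ℚ)/(b:ℚ) ↔ c.num * b < a * (c.den:ℤ) := by
  have hd : (0:ℤ) < (c.den:ℤ) := by exact_mod_cast c.pos
  have h := Rat.divInt_le_divInt (a:=a) (c:=c.num) hb hd
  rw [Rat.num_divInt_den] at h
  rw [← Rat.divInt_eq_div, lt_iff_not_ge, h, not_le]

lemma rat_div_lt (c : ℚ) {a b : ℤ} (hb : 0 < b) :
    (a:ℚ)/(b:ℚ) < c ↔ a * (c.den:ℤ) < c.num * b := by
  have hd : (0:ℤ) < (c.den:ℤ) := by exact_mod_cast c.pos
  have h := Rat.divInt_le_divInt (a:=c.num) (c:=a) hd hb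
  rw [Rat.num_divInt_den] at h
  rw [← Rat.divInt_eq_div, lt_iff_not_ge, h, not_le]

lemma lt_fmk_iff {a b : ℤ} (hb : 0 < b) (x : QInf) :
    x < fmk a b ↔ fnum x * b < a * fden x := by
  rw [fmk, if_neg hb.ne']
  cases x using WithTop.recTopCoe with
  | top => simp [fnum_top, fden_top, (not_top_lt : ¬ (⊤:QInf) < _), hb.not_gt]
  | coe c =>
    rw [WithTop.coe_lt_coe, fnum_coe, fden_coe]
    rw [rat_lt_div c hb]

lemma fmk_lt_iff {a b : ℤ} (hb : 0 < b) (x : QInf) :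
    fmk a b < x ↔ a * fden x < fnum x * b := by
  rw [fmk, if_neg hb.ne']
  cases x using WithTop.recTopCoe with
  | top =>
    simp only [fnum_top, fden_top, mul_zero, one_mul]
    simp [WithTop.coe_lt_top, hb]
  | coe c =>
    rw [WithTop.coe_lt_coe, fnum_coe, fden_coe]
    rw [rat_div_lt c hb]


lemma det_rel (dp rp dq rq dr rr a b c : ℤ)
    (e1 : dp*rq - dq*rp = a) (e2 : dp*rr - dr*rp = b) (e3 : dq*rr - dr*rq = c) :
    c*dp = b*dq - a*dr ∧ c*rp = b*rq - a*rr := by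
  constructor
  · linear_combination (-dr) * e1 + dq * e2 + (-dp) * e3
  · linear_combination (-rr) * e1 + rq * e2 + (-rp) * e3

lemma eq_fsum_of (p q r : QInf) (hd : fnum p = fnum q + fnum r)
    (hr : fden p = fden q + fden r) : p = fsum q r := by
  rw [fsum, ← hd, ← hr, fmk_self]

lemma eq_fdiff_of (p q r : QInf) (hd : fnum p = fnum q - fnum r)
    (hr : fden p = fden q - fden r) : p = fdiff q r := by
  rw [fdiff, ← hd, ← hr, fmk_self]

lemma eq_fdiff_of' (p q r : QInf) (hd : fnum p = fnum r - fnum q)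
    (hr : fden p = fden r - fden q) : p = fdiff q r := by
  rw [fdiff, show fnum q - fnum r = -(fnum p) by omega,
    show fden q - fden r = -(fden p) by omega, fmk_neg, fmk_self]

lemma rep (p q r : QInf) (hqr : q ≠ r)
    (h1 : FareyNbr p q) (h2 : FareyNbr p r) (h3 : FareyNbr q r) :
    p = fsum q r ∨ p = fdiff q r := by
  rw [FareyNbr, fdist] at h1 h2 h3
  have hp0 := fden_nonneg p
  have hq0 := fden_nonneg q
  have hr0 := fden_nonneg r
  rcases (abs_eq (by norm_num : (0:ℤ) ≤ 1)).mp h1 with e1 | e1 <;>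
  rcases (abs_eq (by norm_num : (0:ℤ) ≤ 1)).mp h2 with e2 | e2 <;>
  rcases (abs_eq (by norm_num : (0:ℤ) ≤ 1)).mp h3 with e3 | e3 <;>
  obtain ⟨hd, hr⟩ := det_rel _ _ _ _ _ _ _ _ _ e1 e2 e3 <;>
  first
    | exact Or.inl (eq_fsum_of _ _ _ (by omega) (by omega))
    | exact Or.inr (eq_fdiff_of _ _ _ (by omega) (by omega))
    | exact Or.inr (eq_fdiff_of' _ _ _ (by omega) (by omega))
    | exact absurd (((fden_eq_zero_iff q).mp (by omega)).trans
        ((fden_eq_zero_iff r).mp (by omega)).symm) hqr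

lemma fsum_between (q r : QInf) (hqr : q ≠ r) (h3 : FareyNbr q r) :
    (q < fsum q r ∧ fsum q r < r) ∨ (r < fsum q r ∧ fsum q r < q) := by
  rw [FareyNbr, fdist] at h3
  have hq0 := fden_nonneg q
  have hr0 := fden_nonneg r
  have hpos : 0 < fden q + fden r := by
    rcases lt_or_ge 0 (fden q + fden r) with h | h
    · exact h
    · exact absurd (((fden_eq_zero_iff q).mp (by omega)).trans
        ((fden_eq_zero_iff r).mp (by omega)).symm) hqr
  rcases (abs_eq (by norm_num : (0:ℤ) ≤ 1)).mp h3 with e3 | e3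
  · right
    rw [fsum, lt_fmk_iff hpos, fmk_lt_iff hpos]
    constructor <;> nlinarith [e3]
  · left
    rw [fsum, lt_fmk_iff hpos, fmk_lt_iff hpos]
    constructor <;> nlinarith [e3]

lemma fdiff_outside (q r : QInf) :
    ¬ ((q < fdiff q r ∧ fdiff q r < r) ∨ (r < fdiff q r ∧ fdiff q r < q)) := by
  rcases lt_trichotomy (fden q - fden r) 0 with h | h | h
  · have hrw : fdiff q r = fmk (fnum r - fnum q) (fden r - fden q) := by
      rw [fdiff, show fnum q - fnum r = -(fnum r - fnum q) by ring,
        show fden q - fden r = -(fden r - fden q) by ring, fmk_neg]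
    have hpos : 0 < fden r - fden q := by omega
    rw [hrw]
    rintro (⟨ha, hb⟩ | ⟨ha, hb⟩) <;>
      rw [lt_fmk_iff hpos] at ha <;> rw [fmk_lt_iff hpos] at hb <;> nlinarith [ha, hb]
  · have htop : fdiff q r = ⊤ := by
      rw [fdiff, fmk, if_pos (by omega)]
    rw [htop]
    rintro (⟨ha, hb⟩ | ⟨ha, hb⟩) <;> exact not_top_lt hb
  · have hpos : 0 < fden q - fden r := by omega
    rw [fdiff]
    rintro (⟨ha, hb⟩ | ⟨ha, hb⟩) <;>
      rw [lt_fmk_iff hpos] at ha <;> rw [fmk_lt_iff hpos] at hb <;> nlinarith [ha, hb]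

/-- Mutation of Farey triples is involutive: if `{p, q, r}` is a Farey triple and
`μ_p({p, q, r}) = {p', q, r}` with `p' = fareyMutEl p q r`, then mutating
`{p', q, r}` in direction `p'` gives back `{p, q, r}`. -/
theorem fareyMut_involutive (p q r : QInf)
    (hpq : p ≠ q) (hpr : p ≠ r) (hqr : q ≠ r)
    (h1 : FareyNbr p q) (h2 : FareyNbr p r) (h3 : FareyNbr q r) :
    fareyMut (fareyMutEl p q r) q r = ({p, q, r} : Set QInf) := by
  have hkey := rep p q r hqr h1 h2 h3
  have hsb := fsum_between q r hqr h3
  have hdo := fdiff_outside q r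
  rcases hkey with hp | hp
  · have hc : (q < p ∧ p < r) ∨ (r < p ∧ p < q) := by rw [hp]; exact hsb
    have ha : fareyMutEl p q r = fdiff q r := by rw [fareyMutEl, if_pos hc]
    have hb : fareyMutEl (fdiff q r) q r = fsum q r := by rw [fareyMutEl, if_neg hdo]
    rw [fareyMut, ha, hb, ← hp]
  · have hc : ¬ ((q < p ∧ p < r) ∨ (r < p ∧ p < q)) := by rw [hp]; exact hdo
    have ha : fareyMutEl p q r = fsum q r := by rw [fareyMutEl, if_neg hc]
    have hb : fareyMutEl (fsum q r) q r = fdiff q r := by rw [fareyMutEl, if_pos hsb]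
    rw [fareyMut, ha, hb, ← hp]
end
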